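/- Let P=(x₁,y₁) and Q=(x₂,y₂) be points on the twisted Edwards curve E with 1+d·x₁x₂y₁y₂ ≠ 0 and 1−d·x₁x₂y₁y₂ ≠ 0, and let (x₃,y₃)=P+Q and (x₄,y₄)=P−Q be given by the stated addition formulas. Set r_P = x₁²y₁² and r_Q = x₂²y₂². If d²·r_P·r_Q ≠ 1, then (x₃y₃)²·(x₄y₄)² = (r_P − r_Q)²/(d²·r_P·r_Q − 1)². -/

import Mathlib

/-- Differential addition for the degree-8 compression `f₈(x,y) = x²y²` on the
twisted Edwards curve `a·x² + y² = 1 + d·x²·y²`. -/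
theorem edwards_deg8_diff_add {K : Type*} [Field K] (a d : K)
    (hchar : (2 : K) ≠ 0) (ha : a ≠ 0) (hd : d ≠ 0) (had : a ≠ d)
    (x1 y1 x2 y2 x3 y3 x4 y4 : K)
    (hP : a * x1 ^ 2 + y1 ^ 2 = 1 + d * x1 ^ 2 * y1 ^ 2)
    (hQ : a * x2 ^ 2 + y2 ^ 2 = 1 + d * x2 ^ 2 * y2 ^ 2)
    (hden1 : 1 + d * x1 * x2 * y1 * y2 ≠ 0)
    (hden2 : 1 - d * x1 * x2 * y1 * y2 ≠ 0)
    (hx3 : x3 = (x1 * y2 + y1 * x2) / (1 + d * x1 * x2 * y1 * y2))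
    (hy3 : y3 = (y1 * y2 - a * x1 * x2) / (1 - d * x1 * x2 * y1 * y2))
    (hx4 : x4 = (x1 * y2 - y1 * x2) / (1 - d * x1 * x2 * y1 * y2))
    (hy4 : y4 = (y1 * y2 + a * x1 * x2) / (1 + d * x1 * x2 * y1 * y2))
    (rP rQ : K)
    (hrP : rP = x1 ^ 2 * y1 ^ 2) (hrQ : rQ = x2 ^ 2 * y2 ^ 2)
    (hM0 : d ^ 2 * rP * rQ ≠ 1) :
    (x3 * y3) ^ 2 * (x4 * y4) ^ 2 = (rP - rQ) ^ 2 / (d ^ 2 * rP * rQ - 1) ^ 2 := by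
  have hM : d ^ 2 * rP * rQ - 1 ≠ 0 := sub_ne_zero.mpr hM0
  have key : (x1^2*y2^2 - x2^2*y1^2) * (y1^2*y2^2 - a^2*x1^2*x2^2)
      = (x1^2*y1^2 - x2^2*y2^2) * (1 - d^2*x1^2*y1^2*x2^2*y2^2) := by
    linear_combination (x1^2*y1^2*(a*x2^2+y2^2+1+d*x2^2*y2^2)) * hQ
      - (x2^2*y2^2*(a*x1^2+y1^2+1+d*x1^2*y1^2)) * hP
  subst hx3 hy3 hx4 hy4 hrP hrQ
  have e : ((x1 * y2 + y1 * x2) / (1 + d * x1 * x2 * y1 * y2) * ((y1 * y2 - a * x1 * x2) / (1 - d * x1 * x2 * y1 * y2))) ^ 2 *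
      ((x1 * y2 - y1 * x2) / (1 - d * x1 * x2 * y1 * y2) * ((y1 * y2 + a * x1 * x2) / (1 + d * x1 * x2 * y1 * y2))) ^ 2
      = ((x1^2*y2^2 - x2^2*y1^2) * (y1^2*y2^2 - a^2*x1^2*x2^2)) ^ 2 / ((1 + d * x1 * x2 * y1 * y2) ^ 4 * (1 - d * x1 * x2 * y1 * y2) ^ 4) := by
    field_simp
    ring
  rw [e, key, div_eq_div_iff (mul_ne_zero (pow_ne_zero 4 hden1) (pow_ne_zero 4 hden2)) (pow_ne_zero 2 hM)]
  ring
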